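/- The divided difference operator Δ_{k-1} acting on the variables x_{k-1}, x_k satisfies: if g(x) is symmetric in (x_1,...,x_k) and w is an auxiliary variable, then Δ_{k-1} [ (∏_{j=1}^{k-1} (w - t x_j)/(w - x_j)) · g(x)/(w - x_k) ] = t · (∏_{j=1}^{k-2} (w - t x_j)/(w - x_j)) · g(x)/((w - x_{k-1})(w - x_k)). -/

import Mathlib

open scoped BigOperators

/-- The divided-difference operator `Δ_{k-1}` (acting on the variables
`x_{k-1}, x_k`; here 0-indexed as `x (k-2), x (k-1)`) satisfies: if `g` is symmetric in
the variables `x_1,…,x_k` and `w` is an auxiliary variable, then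
`Δ_{k-1} [ (∏_{j=1}^{k-1} (w - t x_j)/(w - x_j)) · g(x)/(w - x_k) ]
  = t · (∏_{j=1}^{k-2} (w - t x_j)/(w - x_j)) · g(x)/((w - x_{k-1})(w - x_k))`,
where `Δ F (x) = (F(σ x) - F(x))/(x_{k-1} - x_k)` and `σ` transposes `x_{k-1}` and `x_k`. -/
theorem divided_difference_identity
    (F : Type*) [Field F] (k : ℕ) (hk : 2 ≤ k) (t w : F) (x : ℕ → F)
    (g : (ℕ → F) → F)
    (hg : ∀ (y : ℕ → F) (i j : ℕ), i < k → j < k → g (y ∘ (Equiv.swap i j)) = g y)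
    (hx : x (k - 2) ≠ x (k - 1)) (hw : ∀ j < k, w ≠ x j) :
    (fun Fx : (ℕ → F) → F =>
        (Fx (x ∘ (Equiv.swap (k - 2) (k - 1))) - Fx x) / (x (k - 2) - x (k - 1)) =
          t * (∏ j ∈ Finset.range (k - 2), (w - t * x j) / (w - x j)) * g x /
            ((w - x (k - 2)) * (w - x (k - 1))))
      (fun y => (∏ j ∈ Finset.range (k - 1), (w - t * y j) / (w - y j)) * g y /
        (w - y (k - 1))) := by
  simp only
  have hk2 : k - 2 < k := by omega
  have hk1 : k - 1 < k := by omega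
  have hk12 : k - 1 = (k - 2) + 1 := by omega
  have hne : k - 2 ≠ k - 1 := by omega
  have hs2 : Equiv.swap (k - 2) (k - 1) (k - 2) = k - 1 := Equiv.swap_apply_left _ _
  have hs1 : Equiv.swap (k - 2) (k - 1) (k - 1) = k - 2 := Equiv.swap_apply_right _ _
  have hgy : g (x ∘ Equiv.swap (k - 2) (k - 1)) = g x := hg x _ _ hk2 hk1
  have hprod : ∀ j ∈ Finset.range (k - 2),
      (w - t * (x ∘ Equiv.swap (k - 2) (k - 1)) j) / (w - (x ∘ Equiv.swap (k - 2) (k - 1)) j)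
        = (w - t * x j) / (w - x j) := by
    intro j hj
    simp only [Finset.mem_range] at hj
    have : Equiv.swap (k - 2) (k - 1) j = j :=
      Equiv.swap_apply_of_ne_of_ne (by omega) (by omega)
    simp [Function.comp, this]
  rw [hk12, Finset.prod_range_succ, Finset.prod_range_succ, ← hk12,
    Finset.prod_congr rfl hprod, hgy]
  simp only [Function.comp_apply, hs1, hs2]
  have ha : w - x (k - 2) ≠ 0 := sub_ne_zero.mpr (hw _ hk2)
  have hb : w - x (k - 1) ≠ 0 := sub_ne_zero.mpr (hw _ hk1)
  have hab : x (k - 2) - x (k - 1) ≠ 0 := sub_ne_zero.mpr hx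
  have hprodx : ∀ j ∈ Finset.range (k - 2), w - x j ≠ 0 := fun j hj =>
    sub_ne_zero.mpr (hw j (by simp only [Finset.mem_range] at hj; omega))
  rw [Finset.prod_div_distrib]
  have hP : ∏ j ∈ Finset.range (k - 2), (w - x j) ≠ 0 := Finset.prod_ne_zero_iff.mpr hprodx
  field_simp
  ring
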